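/- Assume that for every h ≡ 0 (mod 4), h ≥ 4, there exists a Hadamard matrix H of order h with excess σ(H) ≥ (2/π)^(1/2)·h^(3/2), and that D(h+1) ≥ h^(h/2)·(1 + σ(h)/h) where σ(h) is the maximal excess. Then for n ≡ 1 (mod 4), n ≥ 5, R(n) := D(n)/n^(n/2) satisfies R(n) ≥ (2/(πe))^(1/2). -/

import Mathlib

theorem stmt_16 (D σ : ℕ → ℝ)
    (hD : ∀ m : ℕ, 0 < m → IsGreatest
      {x : ℝ | ∃ A : Matrix (Fin m) (Fin m) ℝ,
        (∀ i j, A i j = 1 ∨ A i j = -1) ∧ x = |A.det|} (D m))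
    (hσ : ∀ h : ℕ, 4 ≤ h → h % 4 = 0 → IsGreatest
      {x : ℝ | ∃ H : Matrix (Fin h) (Fin h) ℝ,
        (∀ i j, H i j = 1 ∨ H i j = -1) ∧ H * H.transpose = (h : ℝ) • 1 ∧
        x = ∑ i, ∑ j, H i j} (σ h))
    (hexcess : ∀ h : ℕ, 4 ≤ h → h % 4 = 0 →
      ((2 / Real.pi) ^ ((1 : ℝ) / 2)) * (h : ℝ) ^ ((3 : ℝ) / 2) ≤ σ h)
    (hborder : ∀ h : ℕ, 4 ≤ h → h % 4 = 0 →
      (h : ℝ) ^ ((h : ℝ) / 2) * (1 + σ h / h) ≤ D (h + 1))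
    (n : ℕ) (hn : 5 ≤ n) (hmod : n % 4 = 1) :
    (2 / (Real.pi * Real.exp 1)) ^ ((1 : ℝ) / 2) ≤ D n / (n : ℝ) ^ ((n : ℝ) / 2) := by
  obtain ⟨h, rfl⟩ : ∃ h : ℕ, n = h + 1 := ⟨n - 1, by omega⟩
  have hh4 : 4 ≤ h := by omega
  have hhmod : h % 4 = 0 := by omega
  set hr : ℝ := (h : ℝ) with hhr
  have hrpos : (0:ℝ) < hr := by
    rw [hhr]; exact_mod_cast (by omega : 0 < h)
  have hnr : ((h + 1 : ℕ) : ℝ) = hr + 1 := by push_cast; ring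
  set nr : ℝ := hr + 1 with hnrdef
  have hnrpos : (0:ℝ) < nr := by linarith
  set A : ℝ := (2 / Real.pi) ^ ((1 : ℝ) / 2) with hA
  have hApos : 0 < A := by
    apply Real.rpow_pos_of_pos
    positivity
  have hA1 : A ≤ 1 := by
    apply Real.rpow_le_one (by positivity)
    · rw [div_le_one Real.pi_pos]
      linarith [Real.pi_gt_three]
    · norm_num
  -- Step A : nr ^ (hr/2) ≤ hr ^ (hr/2) * exp (1/2)
  have base : nr ≤ hr * Real.exp (1 / hr) := by
    have h1 : 1 + 1/hr ≤ Real.exp (1/hr) := by linarith [Real.add_one_le_exp (1/hr)]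
    have := mul_le_mul_of_nonneg_left h1 hrpos.le
    calc nr = hr * (1 + 1/hr) := by field_simp; exact hnrdef
    _ ≤ hr * Real.exp (1/hr) := this
  have stepA : nr ^ (hr/2) ≤ hr ^ (hr/2) * Real.exp (1/2) := by
    calc nr ^ (hr/2) ≤ (hr * Real.exp (1/hr)) ^ (hr/2) :=
          Real.rpow_le_rpow hnrpos.le base (by positivity)
      _ = hr ^ (hr/2) * (Real.exp (1/hr)) ^ (hr/2) :=
          Real.mul_rpow hrpos.le (Real.exp_pos _).le
      _ = hr ^ (hr/2) * Real.exp (1/hr * (hr/2)) := by rw [← Real.exp_mul]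
      _ = hr ^ (hr/2) * Real.exp (1/2) := by
          congr 1
          field_simp
  -- Step B : A * nr ^ ((1:ℝ)/2) ≤ 1 + A * hr ^ ((1:ℝ)/2)
  have stepB : A * nr ^ ((1:ℝ)/2) ≤ 1 + A * hr ^ ((1:ℝ)/2) := by
    have e1 : nr ^ ((1:ℝ)/2) = Real.sqrt nr := (Real.sqrt_eq_rpow nr).symm
    have e2 : hr ^ ((1:ℝ)/2) = Real.sqrt hr := (Real.sqrt_eq_rpow hr).symm
    rw [e1, e2]
    have sa : Real.sqrt nr ≤ Real.sqrt hr + 1 := by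
      have h1 : Real.sqrt nr ^ 2 = nr := Real.sq_sqrt hnrpos.le
      have h2 : Real.sqrt hr ^ 2 = hr := Real.sq_sqrt hrpos.le
      nlinarith [Real.sqrt_nonneg nr, Real.sqrt_nonneg hr]
    nlinarith [Real.sqrt_nonneg hr]
  -- excess bound : A * hr ^ ((1:ℝ)/2) ≤ σ h / hr
  have hexc : A * hr ^ ((1:ℝ)/2) ≤ σ h / hr := by
    rw [le_div_iff₀ hrpos]
    have h32 : hr ^ ((3:ℝ)/2) = hr ^ ((1:ℝ)/2) * hr := by
      rw [show (3:ℝ)/2 = 1/2 + 1 by norm_num, Real.rpow_add hrpos, Real.rpow_one]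
    have := hexcess h hh4 hhmod
    rw [h32] at this
    calc A * hr ^ ((1:ℝ)/2) * hr = A * (hr ^ ((1:ℝ)/2) * hr) := by ring
      _ ≤ σ h := this
  -- main chain
  have key : (2 / (Real.pi * Real.exp 1)) ^ ((1 : ℝ) / 2) * nr ^ (nr / 2) ≤ D (h + 1) := by
    have hsplit : (2 / (Real.pi * Real.exp 1)) ^ ((1 : ℝ) / 2)
        = A * (Real.exp (1/2))⁻¹ := by
      have : 2 / (Real.pi * Real.exp 1) = (2 / Real.pi) * (Real.exp 1)⁻¹ := by
        rw [div_mul_eq_div_div]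
        rw [div_eq_mul_inv]
      rw [this, Real.mul_rpow (by positivity) (by positivity), Real.inv_rpow (Real.exp_pos 1).le,
        ← Real.exp_one_rpow ((1:ℝ)/2)]
    have hpow : nr ^ (nr / 2) = nr ^ (hr/2) * nr ^ ((1:ℝ)/2) := by
      rw [← Real.rpow_add hnrpos]
      congr 1
      ring
    have hexppos := Real.exp_pos ((1:ℝ)/2)
    calc (2 / (Real.pi * Real.exp 1)) ^ ((1 : ℝ) / 2) * nr ^ (nr / 2)
        = A * (Real.exp (1/2))⁻¹ * (nr ^ (hr/2) * nr ^ ((1:ℝ)/2)) := by rw [hsplit, hpow]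
      _ ≤ A * (Real.exp (1/2))⁻¹ * ((hr ^ (hr/2) * Real.exp (1/2)) * nr ^ ((1:ℝ)/2)) := by
          apply mul_le_mul_of_nonneg_left _ (by positivity)
          apply mul_le_mul_of_nonneg_right stepA (by positivity)
      _ = hr ^ (hr/2) * (A * nr ^ ((1:ℝ)/2)) := by
          field_simp
      _ ≤ hr ^ (hr/2) * (1 + A * hr ^ ((1:ℝ)/2)) := by
          apply mul_le_mul_of_nonneg_left stepB (by positivity)
      _ ≤ hr ^ (hr/2) * (1 + σ h / hr) := by
          apply mul_le_mul_of_nonneg_left _ (by positivity)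
          linarith [hexc]
      _ ≤ D (h + 1) := hborder h hh4 hhmod
  rw [le_div_iff₀ (by positivity : (0:ℝ) < ((h+1:ℕ):ℝ) ^ (((h+1:ℕ):ℝ)/2))]
  calc (2 / (Real.pi * Real.exp 1)) ^ ((1 : ℝ) / 2) * ((h+1:ℕ):ℝ) ^ (((h+1:ℕ):ℝ)/2)
      = (2 / (Real.pi * Real.exp 1)) ^ ((1 : ℝ) / 2) * nr ^ (nr / 2) := by rw [hnr]
    _ ≤ D (h + 1) := key
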